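/- Suppose the layered directed graph H (built from G with budget B) contains a directed path of total weight W from vertex (u,i) to vertex (v,j) with j ≥ i. Then the complete graph K on V (with self-loops of weight 0) contains a path from u to v of total weight W that uses non-edges of G of total cost at most j - i. -/

import Mathlib

open scoped ENNReal

/-- Adjacency of the layered directed graph `H`: within a level we follow edges of `G`;
a non-edge of `G` (including self-loops) advances the level by its cost. Levels stay `≤ B`. -/
def Hadj {V : Type*} (G : SimpleGraph V) (cst : Sym2 V → ℕ) (B : ℕ) :
    V × ℕ → V × ℕ → Prop := fun p q =>
  p.2 ≤ B ∧ q.2 ≤ B ∧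
    ((G.Adj p.1 q.1 ∧ q.2 = p.2) ∨ (¬ G.Adj p.1 q.1 ∧ q.2 = p.2 + cst s(p.1, q.1)))

/-- Weight of a directed path given as a list of vertices. -/
noncomputable def dlistWeight {α : Type*} (wt : α → α → ℝ≥0∞) (l : List α) : ℝ≥0∞ :=
  ((l.zip l.tail).map fun p => wt p.1 p.2).sum

/-- Total cost of the non-edges of `G` used by a path in the complete graph `K`,
given as a list of vertices. -/
def listCost {V : Type*} (G : SimpleGraph V) [DecidableRel G.Adj] (cst : Sym2 V → ℕ)
    (l : List V) : ℕ :=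
  ((l.zip l.tail).map fun p => if G.Adj p.1 p.2 then 0 else cst s(p.1, p.2)).sum

/-- A directed path in `H` of weight `W` from `(u,i)` to `(v,j)` projects to a path in the
complete graph `K` of the same weight using non-edges of total cost at most `j - i`. -/

lemma weight_map {α β : Type*} (w : β → β → ℝ≥0∞) (f : α → β) (l : List α) :
    dlistWeight w (l.map f) = dlistWeight (fun p q => w (f p) (f q)) l := by
  unfold dlistWeight
  rw [← List.map_tail, List.zip_map]
  simp [Function.comp_def]

lemma cost_aux {V : Type*} (G : SimpleGraph V) [DecidableRel G.Adj] (cst : Sym2 V → ℕ)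
    (B : ℕ) : ∀ (l : List (V × ℕ)), l.Chain' (Hadj G cst B) →
    ∀ p q, l.head? = some p → l.getLast? = some q →
      listCost G cst (l.map Prod.fst) + p.2 = q.2
  | [], _, p, q, hp, hq => by simp at hp
  | [a], _, p, q, hp, hq => by
      simp at hp hq; subst hp; subst hq; simp [listCost]
  | a :: b :: t, hc, p, q, hp, hq => by
      rw [List.Chain', List.isChain_cons_cons] at hc
      obtain ⟨hab, hc⟩ := hc
      have ih := cost_aux G cst B (b :: t) hc b q rfl
        (by rw [← hq, List.getLast?_cons_cons])
      simp only [List.head?_cons, Option.some.injEq] at hp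
      subst hp
      simp only [List.map_cons, listCost, List.zip_cons_cons, List.tail_cons,
        List.map_cons, List.sum_cons] at ih ⊢
      obtain ⟨-, -, ⟨hadj, heq⟩ | ⟨hadj, heq⟩⟩ := hab
      · simp only [hadj, if_true]
        omega
      · simp only [hadj, if_false]
        omega

theorem stmt5 {V : Type*} (G : SimpleGraph V) [DecidableRel G.Adj]
    (w : V → V → ℝ≥0∞) (cst : Sym2 V → ℕ) (B : ℕ)
    (u v : V) (i j : ℕ) (hij : i ≤ j) (W : ℝ≥0∞)
    (l : List (V × ℕ)) (hhead : l.head? = some (u, i)) (hlast : l.getLast? = some (v, j))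
    (hchain : l.Chain' (Hadj G cst B))
    (hW : dlistWeight (fun p q => w p.1 q.1) l = W) :
    ∃ l' : List V, l'.head? = some u ∧ l'.getLast? = some v ∧
      dlistWeight w l' = W ∧ listCost G cst l' ≤ j - i := by
  refine ⟨l.map Prod.fst, ?_, ?_, ?_, ?_⟩
  · rw [List.head?_map, hhead]; rfl
  · rw [List.getLast?_map, hlast]; rfl
  · rw [weight_map, hW]
  · have := cost_aux G cst B l hchain (u, i) (v, j) hhead hlast
    simp at this
    omega
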